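/- Let C be a cogroupoid and X, Y objects of C. For any algebra homomorphism ξ: C(X,X) → k, the left winding map [ξ]^l_{X,X}: C(X,X) → C(X,X) defined by a ↦ ξ(a_1)a_2 is an algebra automorphism with inverse [ξ∘S_{X,X}]^l; moreover ξ∘S²_{X,X} = ξ, and on C(X,Y) one has [ξ]^l_{X,Y} ∘ S_{Y,X} ∘ S_{X,Y} = S_{Y,X} ∘ S_{X,Y} ∘ [ξ]^l_{X,Y}, where [ξ]^l_{X,Y}(a^{X,Y}) = ξ(a_1^{X,X}) a_2^{X,Y}. -/

import Mathlib

/- STATEMENT 13: Winding automorphisms of a cogroupoid: [ξ]^l_{X,X} is an algebra automorphism with inverse [ξ∘S_{X,X}]^l, ξ∘S²_{X,X} = ξ (so [ξ]^l = [ξS²]^l), and [ξ]^l_{X,Y} commutes with S_{Y,X}∘S_{X,Y} on C(X,Y). -/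

namespace Stmt13

open TensorProduct

noncomputable section

set_option synthInstance.maxHeartbeats 1600000
set_option maxHeartbeats 3200000

variable (k : Type) [Field k]
variable (A : Type) [Ring A] [Algebra k A]
variable (B : Type) [Ring B] [Algebra k B]
variable (P : Type) [Ring P] [Algebra k P]
variable (Q : Type) [Ring Q] [Algebra k Q]

/-- The data and axioms of a (connected) cogroupoid restricted to two objects `X, Y`:
`A = C(X,X)`, `B = C(Y,Y)`, `P = C(X,Y)`, `Q = C(Y,X)`, with all comultiplications
`Δ^Z_{U,V}`, counits `ε_X, ε_Y` and antipodes `S_{U,V}` between them.  In particular `A`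
and `B` are Hopf algebras. -/
structure TwoCogroupoid where
  dA : A →ₐ[k] A ⊗[k] A          -- Δ^X_{X,X}
  dA' : A →ₐ[k] P ⊗[k] Q         -- Δ^Y_{X,X}
  dPX : P →ₐ[k] A ⊗[k] P         -- Δ^X_{X,Y}
  dPY : P →ₐ[k] P ⊗[k] B         -- Δ^Y_{X,Y}
  dQX : Q →ₐ[k] Q ⊗[k] A         -- Δ^X_{Y,X}
  dQY : Q →ₐ[k] B ⊗[k] Q         -- Δ^Y_{Y,X}
  dB : B →ₐ[k] B ⊗[k] B          -- Δ^Y_{Y,Y}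
  dB' : B →ₐ[k] Q ⊗[k] P         -- Δ^X_{Y,Y}
  eX : A →ₐ[k] k                 -- ε_X
  eY : B →ₐ[k] k                 -- ε_Y
  sA : A →ₗ[k] A                 -- S_{X,X}
  sP : P →ₗ[k] Q                 -- S_{X,Y}
  sQ : Q →ₗ[k] P                 -- S_{Y,X}
  sB : B →ₗ[k] B                 -- S_{Y,Y}
  -- coassociativity on A
  coA1 : (TensorProduct.assoc k A A A).toLinearMap ∘ₗ
      TensorProduct.map dA.toLinearMap LinearMap.id ∘ₗ dA.toLinearMap =
    TensorProduct.map LinearMap.id dA.toLinearMap ∘ₗ dA.toLinearMap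
  coA2 : (TensorProduct.assoc k P Q A).toLinearMap ∘ₗ
      TensorProduct.map dA'.toLinearMap LinearMap.id ∘ₗ dA.toLinearMap =
    TensorProduct.map LinearMap.id dQX.toLinearMap ∘ₗ dA'.toLinearMap
  coA3 : (TensorProduct.assoc k A P Q).toLinearMap ∘ₗ
      TensorProduct.map dPX.toLinearMap LinearMap.id ∘ₗ dA'.toLinearMap =
    TensorProduct.map LinearMap.id dA'.toLinearMap ∘ₗ dA.toLinearMap
  coA4 : (TensorProduct.assoc k P B Q).toLinearMap ∘ₗ
      TensorProduct.map dPY.toLinearMap LinearMap.id ∘ₗ dA'.toLinearMap =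
    TensorProduct.map LinearMap.id dQY.toLinearMap ∘ₗ dA'.toLinearMap
  -- coassociativity on P
  coP1 : (TensorProduct.assoc k A A P).toLinearMap ∘ₗ
      TensorProduct.map dA.toLinearMap LinearMap.id ∘ₗ dPX.toLinearMap =
    TensorProduct.map LinearMap.id dPX.toLinearMap ∘ₗ dPX.toLinearMap
  coP2 : (TensorProduct.assoc k P Q P).toLinearMap ∘ₗ
      TensorProduct.map dA'.toLinearMap LinearMap.id ∘ₗ dPX.toLinearMap =
    TensorProduct.map LinearMap.id dB'.toLinearMap ∘ₗ dPY.toLinearMap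
  coP3 : (TensorProduct.assoc k A P B).toLinearMap ∘ₗ
      TensorProduct.map dPX.toLinearMap LinearMap.id ∘ₗ dPY.toLinearMap =
    TensorProduct.map LinearMap.id dPY.toLinearMap ∘ₗ dPX.toLinearMap
  coP4 : (TensorProduct.assoc k P B B).toLinearMap ∘ₗ
      TensorProduct.map dPY.toLinearMap LinearMap.id ∘ₗ dPY.toLinearMap =
    TensorProduct.map LinearMap.id dB.toLinearMap ∘ₗ dPY.toLinearMap
  -- coassociativity on Q
  coQ1 : (TensorProduct.assoc k Q A A).toLinearMap ∘ₗ
      TensorProduct.map dQX.toLinearMap LinearMap.id ∘ₗ dQX.toLinearMap =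
    TensorProduct.map LinearMap.id dA.toLinearMap ∘ₗ dQX.toLinearMap
  coQ2 : (TensorProduct.assoc k B Q A).toLinearMap ∘ₗ
      TensorProduct.map dQY.toLinearMap LinearMap.id ∘ₗ dQX.toLinearMap =
    TensorProduct.map LinearMap.id dQX.toLinearMap ∘ₗ dQY.toLinearMap
  coQ3 : (TensorProduct.assoc k Q P Q).toLinearMap ∘ₗ
      TensorProduct.map dB'.toLinearMap LinearMap.id ∘ₗ dQY.toLinearMap =
    TensorProduct.map LinearMap.id dA'.toLinearMap ∘ₗ dQX.toLinearMap
  coQ4 : (TensorProduct.assoc k B B Q).toLinearMap ∘ₗ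
      TensorProduct.map dB.toLinearMap LinearMap.id ∘ₗ dQY.toLinearMap =
    TensorProduct.map LinearMap.id dQY.toLinearMap ∘ₗ dQY.toLinearMap
  -- coassociativity on B
  coB1 : (TensorProduct.assoc k Q A P).toLinearMap ∘ₗ
      TensorProduct.map dQX.toLinearMap LinearMap.id ∘ₗ dB'.toLinearMap =
    TensorProduct.map LinearMap.id dPX.toLinearMap ∘ₗ dB'.toLinearMap
  coB2 : (TensorProduct.assoc k B Q P).toLinearMap ∘ₗ
      TensorProduct.map dQY.toLinearMap LinearMap.id ∘ₗ dB'.toLinearMap =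
    TensorProduct.map LinearMap.id dB'.toLinearMap ∘ₗ dB.toLinearMap
  coB3 : (TensorProduct.assoc k Q P B).toLinearMap ∘ₗ
      TensorProduct.map dB'.toLinearMap LinearMap.id ∘ₗ dB.toLinearMap =
    TensorProduct.map LinearMap.id dPY.toLinearMap ∘ₗ dB'.toLinearMap
  coB4 : (TensorProduct.assoc k B B B).toLinearMap ∘ₗ
      TensorProduct.map dB.toLinearMap LinearMap.id ∘ₗ dB.toLinearMap =
    TensorProduct.map LinearMap.id dB.toLinearMap ∘ₗ dB.toLinearMap
  -- counit laws
  cuA1 : (TensorProduct.rid k A).toLinearMap ∘ₗ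
      TensorProduct.map LinearMap.id eX.toLinearMap ∘ₗ dA.toLinearMap = LinearMap.id
  cuA2 : (TensorProduct.lid k A).toLinearMap ∘ₗ
      TensorProduct.map eX.toLinearMap LinearMap.id ∘ₗ dA.toLinearMap = LinearMap.id
  cuP1 : (TensorProduct.rid k P).toLinearMap ∘ₗ
      TensorProduct.map LinearMap.id eY.toLinearMap ∘ₗ dPY.toLinearMap = LinearMap.id
  cuP2 : (TensorProduct.lid k P).toLinearMap ∘ₗ
      TensorProduct.map eX.toLinearMap LinearMap.id ∘ₗ dPX.toLinearMap = LinearMap.id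
  cuQ1 : (TensorProduct.rid k Q).toLinearMap ∘ₗ
      TensorProduct.map LinearMap.id eX.toLinearMap ∘ₗ dQX.toLinearMap = LinearMap.id
  cuQ2 : (TensorProduct.lid k Q).toLinearMap ∘ₗ
      TensorProduct.map eY.toLinearMap LinearMap.id ∘ₗ dQY.toLinearMap = LinearMap.id
  cuB1 : (TensorProduct.rid k B).toLinearMap ∘ₗ
      TensorProduct.map LinearMap.id eY.toLinearMap ∘ₗ dB.toLinearMap = LinearMap.id
  cuB2 : (TensorProduct.lid k B).toLinearMap ∘ₗ
      TensorProduct.map eY.toLinearMap LinearMap.id ∘ₗ dB.toLinearMap = LinearMap.id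
  -- antipode laws
  antXX1 : LinearMap.mul' k A ∘ₗ TensorProduct.map (sA) LinearMap.id ∘ₗ dA.toLinearMap =
    Algebra.linearMap k A ∘ₗ eX.toLinearMap
  antXX2 : LinearMap.mul' k A ∘ₗ TensorProduct.map LinearMap.id (sA) ∘ₗ dA.toLinearMap =
    Algebra.linearMap k A ∘ₗ eX.toLinearMap
  antXY1 : LinearMap.mul' k P ∘ₗ TensorProduct.map LinearMap.id (sQ) ∘ₗ dA'.toLinearMap =
    Algebra.linearMap k P ∘ₗ eX.toLinearMap
  antXY2 : LinearMap.mul' k Q ∘ₗ TensorProduct.map (sP) LinearMap.id ∘ₗ dA'.toLinearMap =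
    Algebra.linearMap k Q ∘ₗ eX.toLinearMap
  antYX1 : LinearMap.mul' k Q ∘ₗ TensorProduct.map LinearMap.id (sP) ∘ₗ dB'.toLinearMap =
    Algebra.linearMap k Q ∘ₗ eY.toLinearMap
  antYX2 : LinearMap.mul' k P ∘ₗ TensorProduct.map (sQ) LinearMap.id ∘ₗ dB'.toLinearMap =
    Algebra.linearMap k P ∘ₗ eY.toLinearMap
  antYY1 : LinearMap.mul' k B ∘ₗ TensorProduct.map (sB) LinearMap.id ∘ₗ dB.toLinearMap =
    Algebra.linearMap k B ∘ₗ eY.toLinearMap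
  antYY2 : LinearMap.mul' k B ∘ₗ TensorProduct.map LinearMap.id (sB) ∘ₗ dB.toLinearMap =
    Algebra.linearMap k B ∘ₗ eY.toLinearMap

variable {k A B P Q}

/-- the left winding endomorphism `a ↦ f(a_1) a_2` of `A = C(X,X)` associated to a linear
functional `f` -/
def windAL (T : TwoCogroupoid k A B P Q) (f : A →ₗ[k] k) : A →ₗ[k] A :=
  (TensorProduct.lid k A).toLinearMap ∘ₗ
    TensorProduct.map f LinearMap.id ∘ₗ T.dA.toLinearMap

/-- the left winding endomorphism `[ξ]^l_{X,X} : a ↦ ξ(a_1) a_2` of `A = C(X,X)` -/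
def windA (T : TwoCogroupoid k A B P Q) (ξ : A →ₐ[k] k) : A →ₗ[k] A :=
  windAL T ξ.toLinearMap

/-- the left winding endomorphism `[ξ]^l_{X,Y} : a ↦ ξ(a_1^{X,X}) a_2^{X,Y}` of
`P = C(X,Y)` -/
def windP (T : TwoCogroupoid k A B P Q) (ξ : A →ₐ[k] k) : P →ₗ[k] P :=
  (TensorProduct.lid k P).toLinearMap ∘ₗ
    TensorProduct.map ξ.toLinearMap LinearMap.id ∘ₗ T.dPX.toLinearMap

section AuxCogroupoid

lemma mul_comp_map {N M : Type} [Ring N] [Ring M] [Algebra k N] [Algebra k M]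
    (F : N →ₐ[k] M) :
    LinearMap.mul' k M ∘ₗ map F.toLinearMap F.toLinearMap
      = F.toLinearMap ∘ₗ LinearMap.mul' k N := by
  ext x y; simp

lemma alg_comp_unit {N M : Type} [Ring N] [Ring M] [Algebra k N] [Algebra k M]
    (F : N →ₐ[k] M) :
    F.toLinearMap ∘ₗ Algebra.linearMap k N = Algebra.linearMap k M := by
  ext; simp

lemma unit_left {C1 C2 M : Type} [AddCommGroup C1] [Module k C1] [AddCommGroup C2]
    [Module k C2] [Ring M] [Algebra k M] (h : C1 →ₗ[k] k) (g : C2 →ₗ[k] M) :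
    LinearMap.mul' k M ∘ₗ map (Algebra.linearMap k M ∘ₗ h) g
      = g ∘ₗ (TensorProduct.lid k C2).toLinearMap ∘ₗ map h LinearMap.id := by
  ext x y; simp [Algebra.smul_def]

lemma unit_right {C1 C2 M : Type} [AddCommGroup C1] [Module k C1] [AddCommGroup C2]
    [Module k C2] [Ring M] [Algebra k M] (h : C2 →ₗ[k] k) (f : C1 →ₗ[k] M) :
    LinearMap.mul' k M ∘ₗ map f (Algebra.linearMap k M ∘ₗ h)
      = f ∘ₗ (TensorProduct.rid k C1).toLinearMap ∘ₗ map LinearMap.id h := by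
  ext x y; simp [Algebra.smul_def, Algebra.commutes]

lemma mul_assoc_map {C1 C2 C3 M : Type} [AddCommGroup C1] [Module k C1] [AddCommGroup C2]
    [Module k C2] [AddCommGroup C3] [Module k C3] [Ring M] [Algebra k M]
    (f : C1 →ₗ[k] M) (g : C2 →ₗ[k] M) (h : C3 →ₗ[k] M) :
    LinearMap.mul' k M ∘ₗ map (LinearMap.mul' k M ∘ₗ map f g) h
        ∘ₗ (TensorProduct.assoc k C1 C2 C3).symm.toLinearMap
      = LinearMap.mul' k M ∘ₗ map f (LinearMap.mul' k M ∘ₗ map g h) := by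
  ext x y z; simp [mul_assoc]

lemma coassoc_symm {C C12 C3 C1 C2 C23 : Type} [AddCommGroup C] [Module k C]
    [AddCommGroup C12] [Module k C12] [AddCommGroup C3] [Module k C3]
    [AddCommGroup C1] [Module k C1] [AddCommGroup C2] [Module k C2]
    [AddCommGroup C23] [Module k C23]
    (Δ12 : C →ₗ[k] C12 ⊗[k] C3) (Δ' : C12 →ₗ[k] C1 ⊗[k] C2)
    (Δ23 : C →ₗ[k] C1 ⊗[k] C23) (Δ'' : C23 →ₗ[k] C2 ⊗[k] C3)
    (hco : (TensorProduct.assoc k C1 C2 C3).toLinearMap ∘ₗ map Δ' LinearMap.id ∘ₗ Δ12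
      = map LinearMap.id Δ'' ∘ₗ Δ23) :
    map Δ' LinearMap.id ∘ₗ Δ12
      = (TensorProduct.assoc k C1 C2 C3).symm.toLinearMap ∘ₗ map LinearMap.id Δ'' ∘ₗ Δ23 := by
  rw [← hco]; ext c; simp

lemma conv_assoc {C C12 C3 C1 C2 C23 M : Type} [AddCommGroup C] [Module k C]
    [AddCommGroup C12] [Module k C12] [AddCommGroup C3] [Module k C3]
    [AddCommGroup C1] [Module k C1] [AddCommGroup C2] [Module k C2]
    [AddCommGroup C23] [Module k C23] [Ring M] [Algebra k M]
    (Δ12 : C →ₗ[k] C12 ⊗[k] C3) (Δ' : C12 →ₗ[k] C1 ⊗[k] C2)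
    (Δ23 : C →ₗ[k] C1 ⊗[k] C23) (Δ'' : C23 →ₗ[k] C2 ⊗[k] C3)
    (hco : (TensorProduct.assoc k C1 C2 C3).toLinearMap ∘ₗ map Δ' LinearMap.id ∘ₗ Δ12
      = map LinearMap.id Δ'' ∘ₗ Δ23)
    (f : C1 →ₗ[k] M) (g : C2 →ₗ[k] M) (h : C3 →ₗ[k] M) :
    LinearMap.mul' k M ∘ₗ map (LinearMap.mul' k M ∘ₗ map f g ∘ₗ Δ') h ∘ₗ Δ12
      = LinearMap.mul' k M ∘ₗ map f (LinearMap.mul' k M ∘ₗ map g h ∘ₗ Δ'') ∘ₗ Δ23 := by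
  have e1 : map (LinearMap.mul' k M ∘ₗ map f g ∘ₗ Δ') h
      = map (LinearMap.mul' k M ∘ₗ map f g) h ∘ₗ map Δ' LinearMap.id := by
    rw [← map_comp, LinearMap.comp_id, LinearMap.comp_assoc]
  have e2 : map f (LinearMap.mul' k M ∘ₗ map g h ∘ₗ Δ'')
      = map f (LinearMap.mul' k M ∘ₗ map g h) ∘ₗ map LinearMap.id Δ'' := by
    rw [← map_comp, LinearMap.comp_id, LinearMap.comp_assoc]
  rw [e1, e2, LinearMap.comp_assoc, coassoc_symm Δ12 Δ' Δ23 Δ'' hco]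
  calc LinearMap.mul' k M ∘ₗ map (LinearMap.mul' k M ∘ₗ map f g) h
        ∘ₗ (TensorProduct.assoc k C1 C2 C3).symm.toLinearMap ∘ₗ map LinearMap.id Δ'' ∘ₗ Δ23
      = (LinearMap.mul' k M ∘ₗ map (LinearMap.mul' k M ∘ₗ map f g) h
          ∘ₗ (TensorProduct.assoc k C1 C2 C3).symm.toLinearMap)
          ∘ₗ map LinearMap.id Δ'' ∘ₗ Δ23 := by
        simp only [LinearMap.comp_assoc]
    _ = (LinearMap.mul' k M ∘ₗ map f (LinearMap.mul' k M ∘ₗ map g h))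
          ∘ₗ map LinearMap.id Δ'' ∘ₗ Δ23 := by rw [mul_assoc_map]
    _ = LinearMap.mul' k M ∘ₗ (map f (LinearMap.mul' k M ∘ₗ map g h)
          ∘ₗ map LinearMap.id Δ'') ∘ₗ Δ23 := by simp only [LinearMap.comp_assoc]

lemma map_assoc_symm {M1 M2 N N' : Type} [AddCommGroup M1] [Module k M1] [AddCommGroup M2]
    [Module k M2] [AddCommGroup N] [Module k N] [AddCommGroup N'] [Module k N']
    (h : N →ₗ[k] N') :
    map LinearMap.id h ∘ₗ (TensorProduct.assoc k M1 M2 N).symm.toLinearMap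
      = (TensorProduct.assoc k M1 M2 N').symm.toLinearMap
          ∘ₗ map LinearMap.id (map LinearMap.id h) := by
  ext x y z; simp

lemma map_id_comp {M1 N N' N'' : Type} [AddCommGroup M1] [Module k M1] [AddCommGroup N]
    [Module k N] [AddCommGroup N'] [Module k N'] [AddCommGroup N''] [Module k N'']
    (a : N' →ₗ[k] N'') (b : N →ₗ[k] N') :
    map (LinearMap.id : M1 →ₗ[k] M1) (a ∘ₗ b)
      = map LinearMap.id a ∘ₗ map LinearMap.id b := by
  rw [← map_comp, LinearMap.id_comp]

section GA
variable {CUV CVU CUU CVV CUZ CZU CVZ CZV CZZ : Type}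
  [Ring CUV] [Algebra k CUV] [Ring CVU] [Algebra k CVU] [Ring CUU] [Algebra k CUU]
  [Ring CVV] [Algebra k CVV] [Ring CUZ] [Algebra k CUZ] [Ring CZU] [Algebra k CZU]
  [Ring CVZ] [Algebra k CVZ] [Ring CZV] [Algebra k CZV] [Ring CZZ] [Algebra k CZZ]
lemma map_rcomp {M1 M2 M3 N : Type} [AddCommGroup M1] [Module k M1] [AddCommGroup M2]
    [Module k M2] [AddCommGroup M3] [Module k M3] [AddCommGroup N] [Module k N]
    (a : M2 →ₗ[k] M3) (b : M1 →ₗ[k] M2) :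
    map a (LinearMap.id : N →ₗ[k] N) ∘ₗ map b LinearMap.id = map (a ∘ₗ b) LinearMap.id := by
  rw [← map_comp, LinearMap.id_comp]

lemma anticomult
    (DZVU : CVU →ₐ[k] CVZ ⊗[k] CZU)
    (DZUV : CUV →ₗ[k] CUZ ⊗[k] CZV)
    (DVUU : CUU →ₗ[k] CUV ⊗[k] CVU)
    (DUVV : CVV →ₗ[k] CVU ⊗[k] CUV)
    (DUZV : CZV →ₗ[k] CZU ⊗[k] CUV)
    (DZVV : CVV →ₗ[k] CVZ ⊗[k] CZV)
    (DUZZ : CZZ →ₗ[k] CZU ⊗[k] CUZ)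
    (DZZV : CZV →ₗ[k] CZZ ⊗[k] CZV)
    (DUUV : CUV →ₗ[k] CUU ⊗[k] CUV)
    (DVUV : CUV →ₗ[k] CUV ⊗[k] CVV)
    (sUV : CUV →ₗ[k] CVU) (sUZ : CUZ →ₗ[k] CZU) (sZV : CZV →ₗ[k] CVZ)
    (eU : CUU →ₗ[k] k) (eV : CVV →ₗ[k] k) (eZ : CZZ →ₗ[k] k)
    (h1 : LinearMap.mul' k CVU ∘ₗ map sUV LinearMap.id ∘ₗ DVUU
      = Algebra.linearMap k CVU ∘ₗ eU)
    (h2 : (TensorProduct.assoc k CVZ CZU CUV).toLinearMap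
        ∘ₗ map DZVU.toLinearMap LinearMap.id ∘ₗ DUVV = map LinearMap.id DUZV ∘ₗ DZVV)
    (h3 : (TensorProduct.assoc k CZU CUZ CZV).toLinearMap
        ∘ₗ map DUZZ LinearMap.id ∘ₗ DZZV = map LinearMap.id DZUV ∘ₗ DUZV)
    (h4 : LinearMap.mul' k CZU ∘ₗ map LinearMap.id sUZ ∘ₗ DUZZ
      = Algebra.linearMap k CZU ∘ₗ eZ)
    (h5 : (TensorProduct.lid k CZV).toLinearMap ∘ₗ map eZ LinearMap.id ∘ₗ DZZV
      = LinearMap.id)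
    (h6 : LinearMap.mul' k CVZ ∘ₗ map LinearMap.id sZV ∘ₗ DZVV
      = Algebra.linearMap k CVZ ∘ₗ eV)
    (h7 : (TensorProduct.assoc k CUV CVU CUV).toLinearMap
        ∘ₗ map DVUU LinearMap.id ∘ₗ DUUV = map LinearMap.id DUVV ∘ₗ DVUV)
    (h8 : (TensorProduct.lid k CUV).toLinearMap ∘ₗ map eU LinearMap.id ∘ₗ DUUV
      = LinearMap.id)
    (h9 : (TensorProduct.rid k CUV).toLinearMap ∘ₗ map LinearMap.id eV ∘ₗ DVUV
      = LinearMap.id) :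
    DZVU.toLinearMap ∘ₗ sUV
      = (TensorProduct.comm k CZU CVZ).toLinearMap ∘ₗ map sUZ sZV ∘ₗ DZUV := by
  set D1 : CVU →ₗ[k] CVZ ⊗[k] CZU := DZVU.toLinearMap with hD1
  set g : CUV →ₗ[k] CVZ ⊗[k] CZU := (TensorProduct.comm k CZU CVZ).toLinearMap ∘ₗ map sUZ sZV ∘ₗ DZUV
    with hg
  set f : CUV →ₗ[k] CVZ ⊗[k] CZU := D1 ∘ₗ sUV with hf
  -- step 1 : f is a left convolution-inverse of D1
  have step1 : LinearMap.mul' k (CVZ ⊗[k] CZU) ∘ₗ map f D1 ∘ₗ DVUU = Algebra.linearMap k (CVZ ⊗[k] CZU) ∘ₗ eU := by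
    have e1 : map f D1 = map D1 D1 ∘ₗ map sUV LinearMap.id := by
      rw [← map_comp, LinearMap.comp_id, hf]
    calc LinearMap.mul' k (CVZ ⊗[k] CZU) ∘ₗ map f D1 ∘ₗ DVUU
        = (LinearMap.mul' k (CVZ ⊗[k] CZU) ∘ₗ map D1 D1) ∘ₗ map sUV LinearMap.id ∘ₗ DVUU := by
          rw [e1]; simp only [LinearMap.comp_assoc]
      _ = (D1 ∘ₗ LinearMap.mul' k CVU) ∘ₗ map sUV LinearMap.id ∘ₗ DVUU := by
          rw [hD1, mul_comp_map DZVU]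
      _ = D1 ∘ₗ LinearMap.mul' k CVU ∘ₗ map sUV LinearMap.id ∘ₗ DVUU := by
          simp only [LinearMap.comp_assoc]
      _ = D1 ∘ₗ Algebra.linearMap k CVU ∘ₗ eU := by rw [h1]
      _ = Algebra.linearMap k (CVZ ⊗[k] CZU) ∘ₗ eU := by
          rw [← LinearMap.comp_assoc, hD1, alg_comp_unit DZVU]
  -- auxiliary maps for step 2
  set K1 : (CVZ ⊗[k] CZU) ⊗[k] (CUZ ⊗[k] CZV) →ₗ[k] CVZ ⊗[k] CZU :=
    LinearMap.mul' k (CVZ ⊗[k] CZU) ∘ₗ map LinearMap.id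
      ((TensorProduct.comm k CZU CVZ).toLinearMap ∘ₗ map sUZ sZV) with hK1
  set ρ : CVZ →ₗ[k] CVZ ⊗[k] CZU := (TensorProduct.mk k CVZ CZU).flip 1 with hρ
  set H : CVZ ⊗[k] (CZU ⊗[k] CZV) →ₗ[k] CVZ ⊗[k] CZU :=
    LinearMap.mul' k (CVZ ⊗[k] CZU) ∘ₗ map LinearMap.id (ρ ∘ₗ sZV)
      ∘ₗ (TensorProduct.assoc k CVZ CZU CZV).symm.toLinearMap with hH
  set H2 : CVZ ⊗[k] CZV →ₗ[k] CVZ ⊗[k] CZU :=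
    ρ ∘ₗ LinearMap.mul' k CVZ ∘ₗ map LinearMap.id sZV with hH2
  have rho_unit : ρ ∘ₗ Algebra.linearMap k CVZ = Algebra.linearMap k (CVZ ⊗[k] CZU) := by
    ext
    simp [hρ, Algebra.TensorProduct.algebraMap_apply, Algebra.TensorProduct.one_def]
  -- step 2 : g is a right convolution-inverse of D1
  have step2 : LinearMap.mul' k (CVZ ⊗[k] CZU) ∘ₗ map D1 g ∘ₗ DUVV = Algebra.linearMap k (CVZ ⊗[k] CZU) ∘ₗ eV := by
    have aux1 : LinearMap.mul' k (CVZ ⊗[k] CZU) ∘ₗ map D1 g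
        = K1 ∘ₗ map LinearMap.id DZUV ∘ₗ map D1 LinearMap.id := by
      ext x y; simp [hK1, hg]
    have hc2 : map D1 LinearMap.id ∘ₗ DUVV
        = (TensorProduct.assoc k CVZ CZU CUV).symm.toLinearMap
            ∘ₗ map LinearMap.id DUZV ∘ₗ DZVV :=
      coassoc_symm DUVV D1 DZVV DUZV h2
    have aux2 : K1 ∘ₗ map LinearMap.id DZUV
          ∘ₗ (TensorProduct.assoc k CVZ CZU CUV).symm.toLinearMap
        = (K1 ∘ₗ (TensorProduct.assoc k CVZ CZU (CUZ ⊗[k] CZV)).symm.toLinearMap)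
            ∘ₗ map LinearMap.id (map LinearMap.id DZUV) := by
      ext x y z; simp
    have aux3 : (K1 ∘ₗ (TensorProduct.assoc k CVZ CZU (CUZ ⊗[k] CZV)).symm.toLinearMap)
          ∘ₗ map LinearMap.id (TensorProduct.assoc k CZU CUZ CZV).toLinearMap
        = H ∘ₗ map LinearMap.id
            (map (LinearMap.mul' k CZU ∘ₗ map LinearMap.id sUZ) LinearMap.id) := by
      ext v a b w
      simp [hK1, hH, hρ, Algebra.TensorProduct.tmul_mul_tmul]
    have aux4 : H ∘ₗ map LinearMap.id (map (Algebra.linearMap k CZU ∘ₗ eZ) LinearMap.id)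
        = H2 ∘ₗ map LinearMap.id ((TensorProduct.lid k CZV).toLinearMap
            ∘ₗ map eZ LinearMap.id) := by
      ext v x w
      simp [hH, hH2, hρ, Algebra.TensorProduct.tmul_mul_tmul,
        Algebra.algebraMap_eq_smul_one, mul_smul_comm]
    calc LinearMap.mul' k (CVZ ⊗[k] CZU) ∘ₗ map D1 g ∘ₗ DUVV
        = K1 ∘ₗ map LinearMap.id DZUV ∘ₗ map D1 LinearMap.id ∘ₗ DUVV := by
          rw [← LinearMap.comp_assoc, aux1]; simp only [LinearMap.comp_assoc]
      _ = (K1 ∘ₗ map LinearMap.id DZUV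
            ∘ₗ (TensorProduct.assoc k CVZ CZU CUV).symm.toLinearMap)
            ∘ₗ map LinearMap.id DUZV ∘ₗ DZVV := by
          rw [hc2]; simp only [LinearMap.comp_assoc]
      _ = ((K1 ∘ₗ (TensorProduct.assoc k CVZ CZU (CUZ ⊗[k] CZV)).symm.toLinearMap)
            ∘ₗ map LinearMap.id (map LinearMap.id DZUV))
            ∘ₗ map LinearMap.id DUZV ∘ₗ DZVV := by rw [aux2]
      _ = (K1 ∘ₗ (TensorProduct.assoc k CVZ CZU (CUZ ⊗[k] CZV)).symm.toLinearMap)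
            ∘ₗ map LinearMap.id (map LinearMap.id DZUV ∘ₗ DUZV) ∘ₗ DZVV := by
          rw [map_id_comp]; simp only [LinearMap.comp_assoc]
      _ = (K1 ∘ₗ (TensorProduct.assoc k CVZ CZU (CUZ ⊗[k] CZV)).symm.toLinearMap)
            ∘ₗ map LinearMap.id ((TensorProduct.assoc k CZU CUZ CZV).toLinearMap
              ∘ₗ map DUZZ LinearMap.id ∘ₗ DZZV) ∘ₗ DZVV := by rw [← h3]
      _ = ((K1 ∘ₗ (TensorProduct.assoc k CVZ CZU (CUZ ⊗[k] CZV)).symm.toLinearMap)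
            ∘ₗ map LinearMap.id (TensorProduct.assoc k CZU CUZ CZV).toLinearMap)
            ∘ₗ map LinearMap.id (map DUZZ LinearMap.id)
            ∘ₗ map LinearMap.id DZZV ∘ₗ DZVV := by
          rw [map_id_comp, map_id_comp]; simp only [LinearMap.comp_assoc]
      _ = (H ∘ₗ map LinearMap.id
              (map (LinearMap.mul' k CZU ∘ₗ map LinearMap.id sUZ) LinearMap.id))
            ∘ₗ map LinearMap.id (map DUZZ LinearMap.id)
            ∘ₗ map LinearMap.id DZZV ∘ₗ DZVV := by rw [aux3]
      _ = H ∘ₗ (map LinearMap.id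
              (map (LinearMap.mul' k CZU ∘ₗ map LinearMap.id sUZ) LinearMap.id)
            ∘ₗ map LinearMap.id (map DUZZ LinearMap.id))
            ∘ₗ map LinearMap.id DZZV ∘ₗ DZVV := by
          simp only [LinearMap.comp_assoc]
      _ = H ∘ₗ map LinearMap.id
              (map (LinearMap.mul' k CZU ∘ₗ map LinearMap.id sUZ ∘ₗ DUZZ) LinearMap.id)
            ∘ₗ map LinearMap.id DZZV ∘ₗ DZVV := by
          rw [← map_id_comp, map_rcomp]; simp only [LinearMap.comp_assoc]
      _ = H ∘ₗ map LinearMap.id (map (Algebra.linearMap k CZU ∘ₗ eZ) LinearMap.id)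
            ∘ₗ map LinearMap.id DZZV ∘ₗ DZVV := by
          rw [h4]
      _ = (H2 ∘ₗ map LinearMap.id ((TensorProduct.lid k CZV).toLinearMap
            ∘ₗ map eZ LinearMap.id)) ∘ₗ map LinearMap.id DZZV ∘ₗ DZVV := by
          rw [← LinearMap.comp_assoc, aux4]
      _ = H2 ∘ₗ (map LinearMap.id ((TensorProduct.lid k CZV).toLinearMap
            ∘ₗ map eZ LinearMap.id) ∘ₗ map LinearMap.id DZZV) ∘ₗ DZVV := by
          simp only [LinearMap.comp_assoc]
      _ = H2 ∘ₗ map LinearMap.id ((TensorProduct.lid k CZV).toLinearMap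
            ∘ₗ map eZ LinearMap.id ∘ₗ DZZV) ∘ₗ DZVV := by
          rw [← map_id_comp]; simp only [LinearMap.comp_assoc]
      _ = H2 ∘ₗ DZVV := by rw [h5, map_id, LinearMap.id_comp]
      _ = ρ ∘ₗ LinearMap.mul' k CVZ ∘ₗ map LinearMap.id sZV ∘ₗ DZVV := by
          rw [hH2]; simp only [LinearMap.comp_assoc]
      _ = ρ ∘ₗ Algebra.linearMap k CVZ ∘ₗ eV := by rw [h6]
      _ = Algebra.linearMap k (CVZ ⊗[k] CZU) ∘ₗ eV := by rw [← LinearMap.comp_assoc, rho_unit]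
  -- sandwich
  calc f = f ∘ₗ ((TensorProduct.rid k CUV).toLinearMap ∘ₗ map LinearMap.id eV ∘ₗ DVUV) := by
        rw [h9, LinearMap.comp_id]
    _ = (f ∘ₗ (TensorProduct.rid k CUV).toLinearMap ∘ₗ map LinearMap.id eV) ∘ₗ DVUV := by
        simp only [LinearMap.comp_assoc]
    _ = (LinearMap.mul' k (CVZ ⊗[k] CZU) ∘ₗ map f (Algebra.linearMap k (CVZ ⊗[k] CZU) ∘ₗ eV)) ∘ₗ DVUV := by
        rw [unit_right]
    _ = LinearMap.mul' k (CVZ ⊗[k] CZU) ∘ₗ map f (LinearMap.mul' k (CVZ ⊗[k] CZU) ∘ₗ map D1 g ∘ₗ DUVV) ∘ₗ DVUV := by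
        rw [← step2]; simp only [LinearMap.comp_assoc]
    _ = LinearMap.mul' k (CVZ ⊗[k] CZU) ∘ₗ map (LinearMap.mul' k (CVZ ⊗[k] CZU) ∘ₗ map f D1 ∘ₗ DVUU) g ∘ₗ DUUV :=
        (conv_assoc DUUV DVUU DVUV DUVV h7 f D1 g).symm
    _ = LinearMap.mul' k (CVZ ⊗[k] CZU) ∘ₗ map (Algebra.linearMap k (CVZ ⊗[k] CZU) ∘ₗ eU) g ∘ₗ DUUV := by
        rw [step1]
    _ = (LinearMap.mul' k (CVZ ⊗[k] CZU) ∘ₗ map (Algebra.linearMap k (CVZ ⊗[k] CZU) ∘ₗ eU) g) ∘ₗ DUUV := by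
        simp only [LinearMap.comp_assoc]
    _ = (g ∘ₗ (TensorProduct.lid k CUV).toLinearMap ∘ₗ map eU LinearMap.id) ∘ₗ DUUV := by
        rw [unit_left]
    _ = g ∘ₗ (TensorProduct.lid k CUV).toLinearMap ∘ₗ map eU LinearMap.id ∘ₗ DUUV := by
        simp only [LinearMap.comp_assoc]
    _ = g := by rw [h8, LinearMap.comp_id]

end GA

lemma mul_comm_k {C1 C2 : Type} [AddCommGroup C1] [Module k C1] [AddCommGroup C2]
    [Module k C2] (f : C1 →ₗ[k] k) (g : C2 →ₗ[k] k) :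
    LinearMap.mul' k k ∘ₗ map f g ∘ₗ (TensorProduct.comm k C2 C1).toLinearMap
      = LinearMap.mul' k k ∘ₗ map g f := by
  ext x y; simp [mul_comm]

lemma unitk : Algebra.linearMap k k = LinearMap.id := by
  ext; simp

end AuxCogroupoid

/-- For any algebra homomorphism `ξ : C(X,X) → k`:
(i) `[ξ]^l_{X,X}` is an algebra automorphism with inverse `[ξ∘S_{X,X}]^l`;
(ii) `ξ∘S²_{X,X} = ξ`, so `[ξ]^l_{X,X} = [ξ∘S²_{X,X}]^l_{X,X}`;
(iii) on `C(X,Y)`, `[ξ]^l_{X,Y} ∘ S_{Y,X} ∘ S_{X,Y} = S_{Y,X} ∘ S_{X,Y} ∘ [ξ]^l_{X,Y}`. -/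
theorem stmt13 (T : TwoCogroupoid k A B P Q) (ξ : A →ₐ[k] k) :
    (∀ a b : A, windA T ξ (a * b) = windA T ξ a * windA T ξ b) ∧
    windA T ξ 1 = 1 ∧
    (windAL T (ξ.toLinearMap ∘ₗ T.sA) ∘ₗ windA T ξ = LinearMap.id ∧
      windA T ξ ∘ₗ windAL T (ξ.toLinearMap ∘ₗ T.sA) = LinearMap.id) ∧
    (ξ.toLinearMap ∘ₗ T.sA ∘ₗ T.sA = ξ.toLinearMap) ∧
    (windA T ξ = windAL T (ξ.toLinearMap ∘ₗ T.sA ∘ₗ T.sA)) ∧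
    (windP T ξ ∘ₗ (T.sQ ∘ₗ T.sP) = (T.sQ ∘ₗ T.sP) ∘ₗ windP T ξ) := by
  -- anticomultiplicativity of the antipodes (three instances of the generic lemma)
  have antiA : T.dA.toLinearMap ∘ₗ T.sA
      = (TensorProduct.comm k A A).toLinearMap ∘ₗ map T.sA T.sA ∘ₗ T.dA.toLinearMap :=
    anticomult T.dA T.dA.toLinearMap T.dA.toLinearMap T.dA.toLinearMap T.dA.toLinearMap
      T.dA.toLinearMap T.dA.toLinearMap T.dA.toLinearMap T.dA.toLinearMap T.dA.toLinearMap
      T.sA T.sA T.sA T.eX.toLinearMap T.eX.toLinearMap T.eX.toLinearMap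
      T.antXX1 T.coA1 T.coA1 T.antXX2 T.cuA2 T.antXX2 T.coA1 T.cuA2 T.cuA1
  have antiP : T.dQX.toLinearMap ∘ₗ T.sP
      = (TensorProduct.comm k A Q).toLinearMap ∘ₗ map T.sA T.sP ∘ₗ T.dPX.toLinearMap :=
    anticomult T.dQX T.dPX.toLinearMap T.dA'.toLinearMap T.dB'.toLinearMap T.dPX.toLinearMap
      T.dB'.toLinearMap T.dA.toLinearMap T.dPX.toLinearMap T.dPX.toLinearMap T.dPY.toLinearMap
      T.sP T.sA T.sP T.eX.toLinearMap T.eY.toLinearMap T.eX.toLinearMap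
      T.antXY2 T.coB1 T.coP1 T.antXX2 T.cuP2 T.antYX1 T.coP2 T.cuP2 T.cuP1
  have antiQ : T.dPX.toLinearMap ∘ₗ T.sQ
      = (TensorProduct.comm k P A).toLinearMap ∘ₗ map T.sQ T.sA ∘ₗ T.dQX.toLinearMap :=
    anticomult T.dPX T.dQX.toLinearMap T.dB'.toLinearMap T.dA'.toLinearMap T.dA'.toLinearMap
      T.dA.toLinearMap T.dA'.toLinearMap T.dA.toLinearMap T.dQY.toLinearMap T.dQX.toLinearMap
      T.sQ T.sQ T.sA T.eY.toLinearMap T.eX.toLinearMap T.eX.toLinearMap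
      T.antYX2 T.coA3 T.coA2 T.antXY1 T.cuA2 T.antXX2 T.coQ3 T.cuQ2 T.cuQ1
  have eins : T.eX.toLinearMap = Algebra.linearMap k k ∘ₗ T.eX.toLinearMap := by
    rw [unitk, LinearMap.id_comp]
  -- unit laws of the convolution algebra of linear functionals on A
  have cf_unit_right : ∀ f : A →ₗ[k] k,
      LinearMap.mul' k k ∘ₗ map f T.eX.toLinearMap ∘ₗ T.dA.toLinearMap = f := by
    intro f
    calc LinearMap.mul' k k ∘ₗ map f T.eX.toLinearMap ∘ₗ T.dA.toLinearMap
        = (LinearMap.mul' k k ∘ₗ map f (Algebra.linearMap k k ∘ₗ T.eX.toLinearMap))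
            ∘ₗ T.dA.toLinearMap := by
          conv_lhs => rw [eins]
          simp only [LinearMap.comp_assoc]
      _ = (f ∘ₗ (TensorProduct.rid k A).toLinearMap ∘ₗ map LinearMap.id T.eX.toLinearMap)
            ∘ₗ T.dA.toLinearMap := by rw [unit_right]
      _ = f ∘ₗ (TensorProduct.rid k A).toLinearMap ∘ₗ map LinearMap.id T.eX.toLinearMap
            ∘ₗ T.dA.toLinearMap := by simp only [LinearMap.comp_assoc]
      _ = f := by rw [T.cuA1, LinearMap.comp_id]
  have cf_unit_left : ∀ g : A →ₗ[k] k,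
      LinearMap.mul' k k ∘ₗ map T.eX.toLinearMap g ∘ₗ T.dA.toLinearMap = g := by
    intro g
    calc LinearMap.mul' k k ∘ₗ map T.eX.toLinearMap g ∘ₗ T.dA.toLinearMap
        = (LinearMap.mul' k k ∘ₗ map (Algebra.linearMap k k ∘ₗ T.eX.toLinearMap) g)
            ∘ₗ T.dA.toLinearMap := by
          conv_lhs => rw [eins]
          simp only [LinearMap.comp_assoc]
      _ = (g ∘ₗ (TensorProduct.lid k A).toLinearMap ∘ₗ map T.eX.toLinearMap LinearMap.id)
            ∘ₗ T.dA.toLinearMap := by rw [unit_left]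
      _ = g ∘ₗ (TensorProduct.lid k A).toLinearMap ∘ₗ map T.eX.toLinearMap LinearMap.id
            ∘ₗ T.dA.toLinearMap := by simp only [LinearMap.comp_assoc]
      _ = g := by rw [T.cuA2, LinearMap.comp_id]
  -- ξ ⋆ (ξ∘S) = ε
  have r1 : LinearMap.mul' k k ∘ₗ map ξ.toLinearMap (ξ.toLinearMap ∘ₗ T.sA)
      ∘ₗ T.dA.toLinearMap = T.eX.toLinearMap := by
    have e1 : map ξ.toLinearMap (ξ.toLinearMap ∘ₗ T.sA)
        = map ξ.toLinearMap ξ.toLinearMap ∘ₗ map LinearMap.id T.sA := by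
      rw [← map_comp, LinearMap.comp_id]
    calc LinearMap.mul' k k ∘ₗ map ξ.toLinearMap (ξ.toLinearMap ∘ₗ T.sA) ∘ₗ T.dA.toLinearMap
        = (LinearMap.mul' k k ∘ₗ map ξ.toLinearMap ξ.toLinearMap)
            ∘ₗ map LinearMap.id T.sA ∘ₗ T.dA.toLinearMap := by
          rw [e1]; simp only [LinearMap.comp_assoc]
      _ = (ξ.toLinearMap ∘ₗ LinearMap.mul' k A)
            ∘ₗ map LinearMap.id T.sA ∘ₗ T.dA.toLinearMap := by rw [mul_comp_map ξ]
      _ = ξ.toLinearMap ∘ₗ LinearMap.mul' k A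
            ∘ₗ map LinearMap.id T.sA ∘ₗ T.dA.toLinearMap := by
          simp only [LinearMap.comp_assoc]
      _ = ξ.toLinearMap ∘ₗ Algebra.linearMap k A ∘ₗ T.eX.toLinearMap := by rw [T.antXX2]
      _ = (ξ.toLinearMap ∘ₗ Algebra.linearMap k A) ∘ₗ T.eX.toLinearMap := by
          simp only [LinearMap.comp_assoc]
      _ = T.eX.toLinearMap := by rw [alg_comp_unit ξ, unitk, LinearMap.id_comp]
  -- (ξ∘S) ⋆ ξ = ε
  have r2 : LinearMap.mul' k k ∘ₗ map (ξ.toLinearMap ∘ₗ T.sA) ξ.toLinearMap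
      ∘ₗ T.dA.toLinearMap = T.eX.toLinearMap := by
    have e1 : map (ξ.toLinearMap ∘ₗ T.sA) ξ.toLinearMap
        = map ξ.toLinearMap ξ.toLinearMap ∘ₗ map T.sA LinearMap.id := by
      rw [← map_comp, LinearMap.comp_id]
    calc LinearMap.mul' k k ∘ₗ map (ξ.toLinearMap ∘ₗ T.sA) ξ.toLinearMap ∘ₗ T.dA.toLinearMap
        = (LinearMap.mul' k k ∘ₗ map ξ.toLinearMap ξ.toLinearMap)
            ∘ₗ map T.sA LinearMap.id ∘ₗ T.dA.toLinearMap := by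
          rw [e1]; simp only [LinearMap.comp_assoc]
      _ = (ξ.toLinearMap ∘ₗ LinearMap.mul' k A)
            ∘ₗ map T.sA LinearMap.id ∘ₗ T.dA.toLinearMap := by rw [mul_comp_map ξ]
      _ = ξ.toLinearMap ∘ₗ LinearMap.mul' k A
            ∘ₗ map T.sA LinearMap.id ∘ₗ T.dA.toLinearMap := by
          simp only [LinearMap.comp_assoc]
      _ = ξ.toLinearMap ∘ₗ Algebra.linearMap k A ∘ₗ T.eX.toLinearMap := by rw [T.antXX1]
      _ = (ξ.toLinearMap ∘ₗ Algebra.linearMap k A) ∘ₗ T.eX.toLinearMap := by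
          simp only [LinearMap.comp_assoc]
      _ = T.eX.toLinearMap := by rw [alg_comp_unit ξ, unitk, LinearMap.id_comp]
  -- ε ∘ S = ε
  have epsS : T.eX.toLinearMap ∘ₗ T.sA = T.eX.toLinearMap := by
    have e1 : map (T.eX.toLinearMap ∘ₗ T.sA) T.eX.toLinearMap
        = map T.eX.toLinearMap T.eX.toLinearMap ∘ₗ map T.sA LinearMap.id := by
      rw [← map_comp, LinearMap.comp_id]
    calc T.eX.toLinearMap ∘ₗ T.sA
        = LinearMap.mul' k k ∘ₗ map (T.eX.toLinearMap ∘ₗ T.sA) T.eX.toLinearMap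
            ∘ₗ T.dA.toLinearMap := (cf_unit_right _).symm
      _ = (LinearMap.mul' k k ∘ₗ map T.eX.toLinearMap T.eX.toLinearMap)
            ∘ₗ map T.sA LinearMap.id ∘ₗ T.dA.toLinearMap := by
          rw [e1]; simp only [LinearMap.comp_assoc]
      _ = (T.eX.toLinearMap ∘ₗ LinearMap.mul' k A)
            ∘ₗ map T.sA LinearMap.id ∘ₗ T.dA.toLinearMap := by rw [mul_comp_map T.eX]
      _ = T.eX.toLinearMap ∘ₗ LinearMap.mul' k A
            ∘ₗ map T.sA LinearMap.id ∘ₗ T.dA.toLinearMap := by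
          simp only [LinearMap.comp_assoc]
      _ = T.eX.toLinearMap ∘ₗ Algebra.linearMap k A ∘ₗ T.eX.toLinearMap := by rw [T.antXX1]
      _ = (T.eX.toLinearMap ∘ₗ Algebra.linearMap k A) ∘ₗ T.eX.toLinearMap := by
          simp only [LinearMap.comp_assoc]
      _ = T.eX.toLinearMap := by rw [alg_comp_unit T.eX, unitk, LinearMap.id_comp]
  -- (ξ∘S²) ⋆ (ξ∘S) = ε
  have r3 : LinearMap.mul' k k ∘ₗ map (ξ.toLinearMap ∘ₗ T.sA ∘ₗ T.sA)
      (ξ.toLinearMap ∘ₗ T.sA) ∘ₗ T.dA.toLinearMap = T.eX.toLinearMap := by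
    have key : (LinearMap.mul' k k ∘ₗ map ξ.toLinearMap (ξ.toLinearMap ∘ₗ T.sA)
          ∘ₗ T.dA.toLinearMap) ∘ₗ T.sA
        = LinearMap.mul' k k ∘ₗ map (ξ.toLinearMap ∘ₗ T.sA ∘ₗ T.sA)
            (ξ.toLinearMap ∘ₗ T.sA) ∘ₗ T.dA.toLinearMap := by
      calc (LinearMap.mul' k k ∘ₗ map ξ.toLinearMap (ξ.toLinearMap ∘ₗ T.sA)
              ∘ₗ T.dA.toLinearMap) ∘ₗ T.sA
          = LinearMap.mul' k k ∘ₗ map ξ.toLinearMap (ξ.toLinearMap ∘ₗ T.sA)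
              ∘ₗ (T.dA.toLinearMap ∘ₗ T.sA) := by simp only [LinearMap.comp_assoc]
        _ = LinearMap.mul' k k ∘ₗ map ξ.toLinearMap (ξ.toLinearMap ∘ₗ T.sA)
              ∘ₗ (TensorProduct.comm k A A).toLinearMap ∘ₗ map T.sA T.sA
              ∘ₗ T.dA.toLinearMap := by rw [antiA]
        _ = (LinearMap.mul' k k ∘ₗ map ξ.toLinearMap (ξ.toLinearMap ∘ₗ T.sA)
              ∘ₗ (TensorProduct.comm k A A).toLinearMap)
              ∘ₗ map T.sA T.sA ∘ₗ T.dA.toLinearMap := by simp only [LinearMap.comp_assoc]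
        _ = (LinearMap.mul' k k ∘ₗ map (ξ.toLinearMap ∘ₗ T.sA) ξ.toLinearMap)
              ∘ₗ map T.sA T.sA ∘ₗ T.dA.toLinearMap := by rw [mul_comm_k]
        _ = LinearMap.mul' k k ∘ₗ (map (ξ.toLinearMap ∘ₗ T.sA) ξ.toLinearMap
              ∘ₗ map T.sA T.sA) ∘ₗ T.dA.toLinearMap := by simp only [LinearMap.comp_assoc]
        _ = LinearMap.mul' k k ∘ₗ map ((ξ.toLinearMap ∘ₗ T.sA) ∘ₗ T.sA)
              (ξ.toLinearMap ∘ₗ T.sA) ∘ₗ T.dA.toLinearMap := by rw [← map_comp]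
        _ = LinearMap.mul' k k ∘ₗ map (ξ.toLinearMap ∘ₗ T.sA ∘ₗ T.sA)
              (ξ.toLinearMap ∘ₗ T.sA) ∘ₗ T.dA.toLinearMap := by
            simp only [LinearMap.comp_assoc]
    rw [← key, r1, epsS]
  -- ξ ∘ S² = ξ
  have hS2 : ξ.toLinearMap ∘ₗ T.sA ∘ₗ T.sA = ξ.toLinearMap := by
    calc ξ.toLinearMap ∘ₗ T.sA ∘ₗ T.sA
        = LinearMap.mul' k k ∘ₗ map (ξ.toLinearMap ∘ₗ T.sA ∘ₗ T.sA) T.eX.toLinearMap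
            ∘ₗ T.dA.toLinearMap := (cf_unit_right _).symm
      _ = LinearMap.mul' k k ∘ₗ map (ξ.toLinearMap ∘ₗ T.sA ∘ₗ T.sA)
            (LinearMap.mul' k k ∘ₗ map (ξ.toLinearMap ∘ₗ T.sA) ξ.toLinearMap
              ∘ₗ T.dA.toLinearMap) ∘ₗ T.dA.toLinearMap := by rw [r2]
      _ = LinearMap.mul' k k ∘ₗ map (LinearMap.mul' k k
            ∘ₗ map (ξ.toLinearMap ∘ₗ T.sA ∘ₗ T.sA) (ξ.toLinearMap ∘ₗ T.sA)
            ∘ₗ T.dA.toLinearMap) ξ.toLinearMap ∘ₗ T.dA.toLinearMap :=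
          (conv_assoc T.dA.toLinearMap T.dA.toLinearMap T.dA.toLinearMap T.dA.toLinearMap
            T.coA1 (ξ.toLinearMap ∘ₗ T.sA ∘ₗ T.sA) (ξ.toLinearMap ∘ₗ T.sA)
            ξ.toLinearMap).symm
      _ = LinearMap.mul' k k ∘ₗ map T.eX.toLinearMap ξ.toLinearMap
            ∘ₗ T.dA.toLinearMap := by rw [r3]
      _ = ξ.toLinearMap := cf_unit_left ξ.toLinearMap
  -- composition of winding endomorphisms is convolution
  have wcomp : ∀ f g : A →ₗ[k] k,
      windAL T g ∘ₗ windAL T f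
        = windAL T (LinearMap.mul' k k ∘ₗ map f g ∘ₗ T.dA.toLinearMap) := by
    intro f g
    have w1 : T.dA.toLinearMap
          ∘ₗ (TensorProduct.lid k A).toLinearMap ∘ₗ map f LinearMap.id
        = ((TensorProduct.lid k (A ⊗[k] A)).toLinearMap ∘ₗ map f LinearMap.id)
            ∘ₗ map LinearMap.id T.dA.toLinearMap := by
      ext x y; simp
    have w2 : ((TensorProduct.lid k A).toLinearMap ∘ₗ map g LinearMap.id)
          ∘ₗ ((TensorProduct.lid k (A ⊗[k] A)).toLinearMap ∘ₗ map f LinearMap.id)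
          ∘ₗ (TensorProduct.assoc k A A A).toLinearMap
        = (TensorProduct.lid k A).toLinearMap
            ∘ₗ map (LinearMap.mul' k k ∘ₗ map f g) LinearMap.id := by
      ext x y z; simp [smul_smul]
    calc windAL T g ∘ₗ windAL T f
        = ((TensorProduct.lid k A).toLinearMap ∘ₗ map g LinearMap.id)
            ∘ₗ (T.dA.toLinearMap
              ∘ₗ (TensorProduct.lid k A).toLinearMap ∘ₗ map f LinearMap.id)
            ∘ₗ T.dA.toLinearMap := by
          simp only [windAL, LinearMap.comp_assoc]
      _ = ((TensorProduct.lid k A).toLinearMap ∘ₗ map g LinearMap.id)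
            ∘ₗ (((TensorProduct.lid k (A ⊗[k] A)).toLinearMap ∘ₗ map f LinearMap.id)
              ∘ₗ map LinearMap.id T.dA.toLinearMap)
            ∘ₗ T.dA.toLinearMap := by rw [w1]
      _ = ((TensorProduct.lid k A).toLinearMap ∘ₗ map g LinearMap.id)
            ∘ₗ ((TensorProduct.lid k (A ⊗[k] A)).toLinearMap ∘ₗ map f LinearMap.id)
            ∘ₗ (map LinearMap.id T.dA.toLinearMap ∘ₗ T.dA.toLinearMap) := by
          simp only [LinearMap.comp_assoc]
      _ = ((TensorProduct.lid k A).toLinearMap ∘ₗ map g LinearMap.id)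
            ∘ₗ ((TensorProduct.lid k (A ⊗[k] A)).toLinearMap ∘ₗ map f LinearMap.id)
            ∘ₗ ((TensorProduct.assoc k A A A).toLinearMap
              ∘ₗ map T.dA.toLinearMap LinearMap.id ∘ₗ T.dA.toLinearMap) := by
          rw [← T.coA1]
      _ = (((TensorProduct.lid k A).toLinearMap ∘ₗ map g LinearMap.id)
            ∘ₗ ((TensorProduct.lid k (A ⊗[k] A)).toLinearMap ∘ₗ map f LinearMap.id)
            ∘ₗ (TensorProduct.assoc k A A A).toLinearMap)
            ∘ₗ map T.dA.toLinearMap LinearMap.id ∘ₗ T.dA.toLinearMap := by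
          simp only [LinearMap.comp_assoc]
      _ = ((TensorProduct.lid k A).toLinearMap
            ∘ₗ map (LinearMap.mul' k k ∘ₗ map f g) LinearMap.id)
            ∘ₗ map T.dA.toLinearMap LinearMap.id ∘ₗ T.dA.toLinearMap := by rw [w2]
      _ = (TensorProduct.lid k A).toLinearMap
            ∘ₗ (map (LinearMap.mul' k k ∘ₗ map f g) LinearMap.id
              ∘ₗ map T.dA.toLinearMap LinearMap.id)
            ∘ₗ T.dA.toLinearMap := by simp only [LinearMap.comp_assoc]
      _ = windAL T (LinearMap.mul' k k ∘ₗ map f g ∘ₗ T.dA.toLinearMap) := by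
          rw [map_rcomp]; simp only [windAL, LinearMap.comp_assoc]
  -- multiplicativity via the algebra-homomorphism presentation
  have ealg : (TensorProduct.lid k A).toLinearMap ∘ₗ map ξ.toLinearMap LinearMap.id
      = ((Algebra.TensorProduct.lid k A).toAlgHom.comp
          (Algebra.TensorProduct.map ξ (AlgHom.id k A))).toLinearMap := by
    ext x y; simp
  have hwa : ∀ a : A, windA T ξ a
      = ((Algebra.TensorProduct.lid k A).toAlgHom.comp
          ((Algebra.TensorProduct.map ξ (AlgHom.id k A)).comp T.dA)) a := by
    intro a
    have h := LinearMap.congr_fun ealg (T.dA a)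
    exact h
  refine ⟨?_, ?_, ⟨?_, ?_⟩, hS2, ?_, ?_⟩
  · intro a b
    rw [hwa, hwa, hwa, map_mul]
  · rw [hwa]; exact map_one _
  · show windAL T (ξ.toLinearMap ∘ₗ T.sA) ∘ₗ windAL T ξ.toLinearMap = LinearMap.id
    rw [wcomp ξ.toLinearMap (ξ.toLinearMap ∘ₗ T.sA), r1]
    exact T.cuA2
  · show windAL T ξ.toLinearMap ∘ₗ windAL T (ξ.toLinearMap ∘ₗ T.sA) = LinearMap.id
    rw [wcomp (ξ.toLinearMap ∘ₗ T.sA) ξ.toLinearMap, r2]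
    exact T.cuA2
  · show windA T ξ = windAL T (ξ.toLinearMap ∘ₗ T.sA ∘ₗ T.sA)
    rw [hS2]; rfl
  · -- the winding endomorphism of C(X,Y) commutes with S²
    have e : (TensorProduct.comm k P A).toLinearMap ∘ₗ map T.sQ T.sA
          ∘ₗ (TensorProduct.comm k A Q).toLinearMap ∘ₗ map T.sA T.sP
        = map (T.sA ∘ₗ T.sA) (T.sQ ∘ₗ T.sP) := by
      ext x y; simp
    have hPS2 : T.dPX.toLinearMap ∘ₗ (T.sQ ∘ₗ T.sP)
        = map (T.sA ∘ₗ T.sA) (T.sQ ∘ₗ T.sP) ∘ₗ T.dPX.toLinearMap := by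
      calc T.dPX.toLinearMap ∘ₗ (T.sQ ∘ₗ T.sP)
          = (T.dPX.toLinearMap ∘ₗ T.sQ) ∘ₗ T.sP := by simp only [LinearMap.comp_assoc]
        _ = ((TensorProduct.comm k P A).toLinearMap ∘ₗ map T.sQ T.sA
              ∘ₗ T.dQX.toLinearMap) ∘ₗ T.sP := by rw [antiQ]
        _ = (TensorProduct.comm k P A).toLinearMap ∘ₗ map T.sQ T.sA
              ∘ₗ (T.dQX.toLinearMap ∘ₗ T.sP) := by simp only [LinearMap.comp_assoc]
        _ = ((TensorProduct.comm k P A).toLinearMap ∘ₗ map T.sQ T.sA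
              ∘ₗ (TensorProduct.comm k A Q).toLinearMap ∘ₗ map T.sA T.sP)
              ∘ₗ T.dPX.toLinearMap := by
            rw [antiP]; simp only [LinearMap.comp_assoc]
        _ = map (T.sA ∘ₗ T.sA) (T.sQ ∘ₗ T.sP) ∘ₗ T.dPX.toLinearMap := by rw [e]
    have aux6 : (TensorProduct.lid k P).toLinearMap ∘ₗ map ξ.toLinearMap LinearMap.id
          ∘ₗ map (T.sA ∘ₗ T.sA) (T.sQ ∘ₗ T.sP)
        = (T.sQ ∘ₗ T.sP) ∘ₗ (TensorProduct.lid k P).toLinearMap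
            ∘ₗ map ξ.toLinearMap LinearMap.id := by
      have e1 : map ξ.toLinearMap LinearMap.id ∘ₗ map (T.sA ∘ₗ T.sA) (T.sQ ∘ₗ T.sP)
          = map (ξ.toLinearMap ∘ₗ T.sA ∘ₗ T.sA) (T.sQ ∘ₗ T.sP) := by
        rw [← map_comp, LinearMap.id_comp]
      rw [e1, hS2]
      ext x y; simp
    calc windP T ξ ∘ₗ (T.sQ ∘ₗ T.sP)
        = ((TensorProduct.lid k P).toLinearMap ∘ₗ map ξ.toLinearMap LinearMap.id)
            ∘ₗ (T.dPX.toLinearMap ∘ₗ (T.sQ ∘ₗ T.sP)) := by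
          simp only [windP, LinearMap.comp_assoc]
      _ = ((TensorProduct.lid k P).toLinearMap ∘ₗ map ξ.toLinearMap LinearMap.id)
            ∘ₗ (map (T.sA ∘ₗ T.sA) (T.sQ ∘ₗ T.sP) ∘ₗ T.dPX.toLinearMap) := by rw [hPS2]
      _ = ((TensorProduct.lid k P).toLinearMap ∘ₗ map ξ.toLinearMap LinearMap.id
            ∘ₗ map (T.sA ∘ₗ T.sA) (T.sQ ∘ₗ T.sP)) ∘ₗ T.dPX.toLinearMap := by
          simp only [LinearMap.comp_assoc]
      _ = ((T.sQ ∘ₗ T.sP) ∘ₗ (TensorProduct.lid k P).toLinearMap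
            ∘ₗ map ξ.toLinearMap LinearMap.id) ∘ₗ T.dPX.toLinearMap := by rw [aux6]
      _ = (T.sQ ∘ₗ T.sP) ∘ₗ windP T ξ := by simp only [windP, LinearMap.comp_assoc]


end

end Stmt13
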